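/- Let n be a natural number, m ≥ 1 a real number, p : Fin n → ℝ nonnegative, σ a permutation of Fin n, and C : Fin n → ℝ such that for every j, C(σ(j)) ≥ (1/m)·Σ_{i ≤ j} p(σ(i)). Then Σ_{j} p(j)·C(j) ≥ ((Σ_{j} p(j))² + Σ_{j} p(j)²)/(2m). -/
import Mathlib

open Finset

lemma split_sum {n : ℕ} (q : Fin n → ℝ) (j : Fin n) :
    ∑ i ∈ Iic j, q i + ∑ i ∈ Ici j, q i = (∑ i, q i) + q j := by
  have h1 : Iic j ∪ Ioi j = univ := by
    ext x; simp [le_or_gt]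
  have h2 : Disjoint (Iic j) (Ioi j) := by
    simp [Finset.disjoint_left]
  have h3 : ∑ i ∈ Iic j, q i + ∑ i ∈ Ioi j, q i = ∑ i, q i := by
    rw [← Finset.sum_union h2, h1]
  have h4 : ∑ i ∈ Ici j, q i = q j + ∑ i ∈ Ioi j, q i := by
    rw [Finset.Ici_eq_cons_Ioi, Finset.sum_cons]
  linarith

lemma double_sum {n : ℕ} (q : Fin n → ℝ) :
    ∑ j, q j * ∑ i ∈ Iic j, q i = ((∑ j, q j) ^ 2 + ∑ j, q j ^ 2) / 2 := by
  have hsym : ∑ j, ∑ i ∈ Iic j, q i * q j = ∑ j, ∑ i ∈ Ici j, q j * q i :=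
    Finset.sum_comm' (by intro x y; simp [and_comm])
  have e1 : ∑ j, q j * ∑ i ∈ Iic j, q i = ∑ j, ∑ i ∈ Iic j, q i * q j := by
    simp [Finset.mul_sum, mul_comm]
  have e2 : ∑ j, ∑ i ∈ Ici j, q j * q i = ∑ j, q j * ∑ i ∈ Ici j, q i := by
    simp [Finset.mul_sum]
  have key : 2 * ∑ j, q j * ∑ i ∈ Iic j, q i = (∑ j, q j) ^ 2 + ∑ j, q j ^ 2 := by
    have : 2 * ∑ j, q j * ∑ i ∈ Iic j, q i
        = ∑ j, q j * ((∑ i ∈ Iic j, q i) + ∑ i ∈ Ici j, q i) := by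
      rw [two_mul]
      nth_rewrite 2 [e1]
      rw [hsym, e2]
      rw [← Finset.sum_add_distrib]
      congr 1; ext j; ring
    rw [this]
    have : ∑ j, q j * ((∑ i ∈ Iic j, q i) + ∑ i ∈ Ici j, q i)
        = ∑ j, q j * ((∑ i, q i) + q j) := by
      congr 1; ext j; rw [split_sum]
    rw [this, Finset.sum_congr rfl (fun j _ => by ring :
      ∀ j ∈ univ, q j * ((∑ i, q i) + q j) = q j * (∑ i, q i) + q j ^ 2),
      Finset.sum_add_distrib, ← Finset.sum_mul, sq]
  linarith

theorem lp_constraint_validity (n : ℕ) (m : ℝ) (hm : 1 ≤ m)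
    (p : Fin n → ℝ) (hp : ∀ j, 0 ≤ p j)
    (σ : Equiv.Perm (Fin n)) (C : Fin n → ℝ)
    (hC : ∀ j, C (σ j) ≥ (1 / m) * ∑ i ∈ Finset.Iic j, p (σ i)) :
    ∑ j, p j * C j ≥ ((∑ j, p j) ^ 2 + ∑ j, (p j) ^ 2) / (2 * m) := by
  set q : Fin n → ℝ := fun j => p (σ j) with hq
  have hm0 : (0:ℝ) < m := lt_of_lt_of_le one_pos hm
  have hre : ∑ j, p j * C j = ∑ j, q j * C (σ j) :=
    (Equiv.sum_comp σ (fun j => p j * C j)).symm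
  have hstep : ∑ j, q j * C (σ j) ≥ ∑ j, q j * ((1/m) * ∑ i ∈ Finset.Iic j, q i) := by
    apply Finset.sum_le_sum
    intro j _
    exact mul_le_mul_of_nonneg_left (hC j) (hp (σ j))
  have hfac : ∑ j, q j * ((1/m) * ∑ i ∈ Finset.Iic j, q i)
      = (1/m) * ∑ j, q j * ∑ i ∈ Finset.Iic j, q i := by
    rw [Finset.mul_sum]; congr 1; ext j; ring
  have hps : ∑ j, p j = ∑ j, q j := (Equiv.sum_comp σ p).symm
  have hps2 : ∑ j, (p j)^2 = ∑ j, (q j)^2 := (Equiv.sum_comp σ (fun j => (p j)^2)).symm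
  rw [hre, hps, hps2]
  calc ∑ j, q j * C (σ j) ≥ (1/m) * ∑ j, q j * ∑ i ∈ Finset.Iic j, q i := by
        rw [← hfac]; exact hstep
    _ = (1/m) * (((∑ j, q j) ^ 2 + ∑ j, q j ^ 2) / 2) := by rw [double_sum]
    _ = ((∑ j, q j) ^ 2 + ∑ j, (q j) ^ 2) / (2 * m) := by ring
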